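/- arXiv:math/0505006 — 2 statements merged into one kernel-verified Lean document; each statement's English description precedes it below -/
import Mathlib

section
/- Let ν and t be unit vectors in ℝ³ with angle θ between them (cos θ = ν·t). Among all symmetric 3×3 matrices σ satisfying σν = t, the minimal Frobenius norm is √(1 + sin²θ), attained by σ = cosθ ν⊗ν + sinθ (ν⊗f + f⊗ν), where f is the unit vector in the direction of the tangential component of t (any unit vector orthogonal to ν if t is parallel to ν). -/
/-- Let `ν, t` be unit vectors in `ℝ³` with `cos θ = ν·t`, `sin θ = √(1−cos²θ)`, and let
`f` be the unit vector in the direction of the tangential component of `t` (any unit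
vector orthogonal to `ν` if `t ∥ ν`), so that `t = cosθ ν + sinθ f`.  Among all symmetric
`3×3` matrices `σ` with `σν = t`, the minimal Frobenius norm is `√(1 + sin²θ)`, and it is
attained by `σ = cosθ ν⊗ν + sinθ (ν⊗f + f⊗ν)`. -/
theorem stmt10 (ν t f : Fin 3 → ℝ)
    (hν : ∑ i, ν i ^ 2 = 1) (ht : ∑ i, t i ^ 2 = 1) (hf : ∑ i, f i ^ 2 = 1)
    (horth : ∑ i, ν i * f i = 0)
    (c s : ℝ) (hc : c = ∑ i, ν i * t i) (hs : s = Real.sqrt (1 - c ^ 2))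
    (hdecomp : ∀ i, t i = c * ν i + s * f i) :
    IsLeast {r | ∃ σ : Matrix (Fin 3) (Fin 3) ℝ, σ.IsSymm ∧ σ.mulVec ν = t ∧
        r = Real.sqrt (∑ i, ∑ j, σ i j ^ 2)} (Real.sqrt (1 + s ^ 2)) ∧
    (Matrix.of fun i j => c * ν i * ν j + s * (ν i * f j + f i * ν j)).mulVec ν = t ∧
    Real.sqrt (∑ i, ∑ j, (c * ν i * ν j + s * (ν i * f j + f i * ν j)) ^ 2)
      = Real.sqrt (1 + s ^ 2) := by
  simp only [Fin.sum_univ_three] at hν hf horth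
  have hcs : c ^ 2 + s ^ 2 = 1 := by
    simp only [Fin.sum_univ_three] at ht
    rw [hdecomp 0, hdecomp 1, hdecomp 2] at ht
    linear_combination ht - c^2*hν - s^2*hf - 2*c*s*horth
  set N := ν 0 ^ 2 + ν 1 ^ 2 + ν 2 ^ 2 with hN
  set F := f 0 ^ 2 + f 1 ^ 2 + f 2 ^ 2 with hF
  set P := ν 0 * f 0 + ν 1 * f 1 + ν 2 * f 2 with hP
  -- the explicit matrix
  have hmulM : (Matrix.of fun i j => c * ν i * ν j + s * (ν i * f j + f i * ν j)).mulVec ν = t := by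
    funext i
    simp only [Matrix.mulVec, dotProduct, Fin.sum_univ_three, Matrix.of_apply]
    linear_combination (c*ν i + s*f i)*hν + s*(ν i)*horth - hdecomp i
  have hnormM : (∑ i, ∑ j, (c * ν i * ν j + s * (ν i * f j + f i * ν j)) ^ 2) = 1 + s ^ 2 := by
    simp only [Fin.sum_univ_three]
    linear_combination (c^2*(N+1)+2*s^2*F)*hν + 2*s^2*hf + (2*s^2*P+4*c*s*N)*horth + hcs
  refine ⟨⟨⟨Matrix.of fun i j => c * ν i * ν j + s * (ν i * f j + f i * ν j), ?_, hmulM, ?_⟩, ?_⟩,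
    hmulM, congrArg Real.sqrt hnormM⟩
  · ext i j
    simp [Matrix.IsSymm, Matrix.transpose_apply]
    ring
  · exact (congrArg Real.sqrt hnormM).symm
  · rintro r ⟨σ, hsym, hmv, rfl⟩
    apply Real.sqrt_le_sqrt
    have hS : ∀ i j, σ j i = σ i j := fun i j => congrFun (congrFun hsym i) j
    have hE : ∀ i, σ i 0 * ν 0 + σ i 1 * ν 1 + σ i 2 * ν 2 = c * ν i + s * f i := by
      intro i
      have := congrFun hmv i
      simp only [Matrix.mulVec, dotProduct, Fin.sum_univ_three] at this
      rw [this, hdecomp i]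
    -- L1 : Frobenius inner product of σ with M equals 1 + s^2
    have L1 : (∑ i, ∑ j, σ i j * (c * ν i * ν j + s * (ν i * f j + f i * ν j))) = 1 + s ^ 2 := by
      simp only [Fin.sum_univ_three]
      linear_combination (c*ν 0 + 2*s*f 0)*hE 0 + (c*ν 1 + 2*s*f 1)*hE 1 + (c*ν 2 + 2*s*f 2)*hE 2
        - s*(ν 0*f 1 - ν 1*f 0)*hS 0 1 - s*(ν 0*f 2 - ν 2*f 0)*hS 0 2 - s*(ν 1*f 2 - ν 2*f 1)*hS 1 2
        + c^2*hν + 2*s^2*hf + 3*c*s*horth + hcs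
    simp only [Fin.sum_univ_three] at L1 hnormM ⊢
    have key : σ 0 0 ^ 2 + σ 0 1 ^ 2 + σ 0 2 ^ 2 + (σ 1 0 ^ 2 + σ 1 1 ^ 2 + σ 1 2 ^ 2)
        + (σ 2 0 ^ 2 + σ 2 1 ^ 2 + σ 2 2 ^ 2)
        = ((σ 0 0 - (c*ν 0*ν 0 + s*(ν 0*f 0 + f 0*ν 0)))^2
          + (σ 0 1 - (c*ν 0*ν 1 + s*(ν 0*f 1 + f 0*ν 1)))^2
          + (σ 0 2 - (c*ν 0*ν 2 + s*(ν 0*f 2 + f 0*ν 2)))^2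
          + (σ 1 0 - (c*ν 1*ν 0 + s*(ν 1*f 0 + f 1*ν 0)))^2
          + (σ 1 1 - (c*ν 1*ν 1 + s*(ν 1*f 1 + f 1*ν 1)))^2
          + (σ 1 2 - (c*ν 1*ν 2 + s*(ν 1*f 2 + f 1*ν 2)))^2
          + (σ 2 0 - (c*ν 2*ν 0 + s*(ν 2*f 0 + f 2*ν 0)))^2
          + (σ 2 1 - (c*ν 2*ν 1 + s*(ν 2*f 1 + f 2*ν 1)))^2
          + (σ 2 2 - (c*ν 2*ν 2 + s*(ν 2*f 2 + f 2*ν 2)))^2) + 1 + s ^ 2 := by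
      linear_combination 2*L1 - hnormM
    have hpos : (0:ℝ) ≤ (σ 0 0 - (c*ν 0*ν 0 + s*(ν 0*f 0 + f 0*ν 0)))^2
          + (σ 0 1 - (c*ν 0*ν 1 + s*(ν 0*f 1 + f 0*ν 1)))^2
          + (σ 0 2 - (c*ν 0*ν 2 + s*(ν 0*f 2 + f 0*ν 2)))^2
          + (σ 1 0 - (c*ν 1*ν 0 + s*(ν 1*f 0 + f 1*ν 0)))^2
          + (σ 1 1 - (c*ν 1*ν 1 + s*(ν 1*f 1 + f 1*ν 1)))^2
          + (σ 1 2 - (c*ν 1*ν 2 + s*(ν 1*f 2 + f 1*ν 2)))^2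
          + (σ 2 0 - (c*ν 2*ν 0 + s*(ν 2*f 0 + f 2*ν 0)))^2
          + (σ 2 1 - (c*ν 2*ν 1 + s*(ν 2*f 1 + f 2*ν 1)))^2
          + (σ 2 2 - (c*ν 2*ν 2 + s*(ν 2*f 2 + f 2*ν 2)))^2 := by positivity
    linarith [key, hpos]
end

section
/- The supremum over unit vectors t ∈ ℝ³ of the minimal Frobenius norm of a symmetric matrix σ with σν = t (ν a fixed unit vector) equals √2, attained when t is perpendicular to ν. -/
open Finset

/-- The minimal-norm symmetric matrix mapping ν to t. -/
noncomputable def sig0 (ν t : Fin 3 → ℝ) : Matrix (Fin 3) (Fin 3) ℝ :=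
  Matrix.of fun i j => t i * ν j + ν i * t j - (∑ k, t k * ν k) * (ν i * ν j)

lemma sig0_symm (ν t : Fin 3 → ℝ) : (sig0 ν t).IsSymm := by
  apply Matrix.IsSymm.ext
  intro i j
  simp [sig0]
  ring

lemma sig0_mulVec (ν t : Fin 3 → ℝ) (hν : ∑ i, ν i ^ 2 = 1) :
    (sig0 ν t).mulVec ν = t := by
  funext i
  simp only [Matrix.mulVec, dotProduct, sig0, Matrix.of_apply,
    Fin.sum_univ_three] at *
  fin_cases i <;> simp only [Fin.zero_eta, Fin.mk_one, Fin.reduceFinMk]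
  · linear_combination (t 0 - (t 0 * ν 0 + t 1 * ν 1 + t 2 * ν 2) * ν 0) * hν
  · linear_combination (t 1 - (t 0 * ν 0 + t 1 * ν 1 + t 2 * ν 2) * ν 1) * hν
  · linear_combination (t 2 - (t 0 * ν 0 + t 1 * ν 1 + t 2 * ν 2) * ν 2) * hν

lemma sig0_norm (ν t : Fin 3 → ℝ) (hν : ∑ i, ν i ^ 2 = 1) (ht : ∑ i, t i ^ 2 = 1) :
    ∑ i, ∑ j, sig0 ν t i j ^ 2 = 2 - (∑ i, t i * ν i) ^ 2 := by
  simp only [sig0, Matrix.of_apply, Fin.sum_univ_three] at *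
  linear_combination (2 * (ν 0 ^ 2 + ν 1 ^ 2 + ν 2 ^ 2)) * ht + (2 + (t 0 * ν 0 + t 1 * ν 1 + t 2 * ν 2) ^ 2 * (ν 0 ^ 2 + ν 1 ^ 2 + ν 2 ^ 2) - 3 * (t 0 * ν 0 + t 1 * ν 1 + t 2 * ν 2) ^ 2) * hν

lemma lower_bound (ν t : Fin 3 → ℝ) (hν : ∑ i, ν i ^ 2 = 1) (ht : ∑ i, t i ^ 2 = 1)
    (σ : Matrix (Fin 3) (Fin 3) ℝ) (hs : σ.IsSymm) (hmv : σ.mulVec ν = t) :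
    2 - (∑ i, t i * ν i) ^ 2 ≤ ∑ i, ∑ j, σ i j ^ 2 := by
  have h0 := congrFun hmv 0
  have h1 := congrFun hmv 1
  have h2 := congrFun hmv 2
  simp only [Matrix.mulVec, dotProduct, Fin.sum_univ_three] at h0 h1 h2
  have e10 : σ 1 0 = σ 0 1 := hs.apply 0 1
  have e20 : σ 2 0 = σ 0 2 := hs.apply 0 2
  have e21 : σ 2 1 = σ 1 2 := hs.apply 1 2
  simp only [Fin.sum_univ_three] at hν ht ⊢
  simp only [e10, e20, e21] at h1 h2 ⊢
  have key : σ 0 0 ^ 2 + σ 0 1 ^ 2 + σ 0 2 ^ 2 + (σ 0 1 ^ 2 + σ 1 1 ^ 2 + σ 1 2 ^ 2) +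
      (σ 0 2 ^ 2 + σ 1 2 ^ 2 + σ 2 2 ^ 2) =
      2 - (t 0 * ν 0 + t 1 * ν 1 + t 2 * ν 2) ^ 2 + ((σ 0 0 - (t 0 * ν 0 + ν 0 * t 0 - (t 0 * ν 0 + t 1 * ν 1 + t 2 * ν 2) * (ν 0 * ν 0))) ^ 2 + (σ 1 1 - (t 1 * ν 1 + ν 1 * t 1 - (t 0 * ν 0 + t 1 * ν 1 + t 2 * ν 2) * (ν 1 * ν 1))) ^ 2 + (σ 2 2 - (t 2 * ν 2 + ν 2 * t 2 - (t 0 * ν 0 + t 1 * ν 1 + t 2 * ν 2) * (ν 2 * ν 2))) ^ 2 + 2 * (σ 0 1 - (t 0 * ν 1 + ν 0 * t 1 - (t 0 * ν 0 + t 1 * ν 1 + t 2 * ν 2) * (ν 0 * ν 1))) ^ 2 + 2 * (σ 0 2 - (t 0 * ν 2 + ν 0 * t 2 - (t 0 * ν 0 + t 1 * ν 1 + t 2 * ν 2) * (ν 0 * ν 2))) ^ 2 + 2 * (σ 1 2 - (t 1 * ν 2 + ν 1 * t 2 - (t 0 * ν 0 + t 1 * ν 1 + t 2 * ν 2) * (ν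 1 * ν 2))) ^ 2) := by
    linear_combination 2 * (2 * t 0 - (t 0 * ν 0 + t 1 * ν 1 + t 2 * ν 2) * ν 0) * h0 + 2 * (2 * t 1 - (t 0 * ν 0 + t 1 * ν 1 + t 2 * ν 2) * ν 1) * h1 +
      2 * (2 * t 2 - (t 0 * ν 0 + t 1 * ν 1 + t 2 * ν 2) * ν 2) * h2 + (4 - 2 * (ν 0 ^ 2 + ν 1 ^ 2 + ν 2 ^ 2)) * ht -
      (2 + (t 0 * ν 0 + t 1 * ν 1 + t 2 * ν 2) ^ 2 * (ν 0 ^ 2 + ν 1 ^ 2 + ν 2 ^ 2) - 3 * (t 0 * ν 0 + t 1 * ν 1 + t 2 * ν 2) ^ 2) * hν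
  rw [key]
  have hE : 0 ≤ (σ 0 0 - (t 0 * ν 0 + ν 0 * t 0 - (t 0 * ν 0 + t 1 * ν 1 + t 2 * ν 2) * (ν 0 * ν 0))) ^ 2 + (σ 1 1 - (t 1 * ν 1 + ν 1 * t 1 - (t 0 * ν 0 + t 1 * ν 1 + t 2 * ν 2) * (ν 1 * ν 1))) ^ 2 + (σ 2 2 - (t 2 * ν 2 + ν 2 * t 2 - (t 0 * ν 0 + t 1 * ν 1 + t 2 * ν 2) * (ν 2 * ν 2))) ^ 2 + 2 * (σ 0 1 - (t 0 * ν 1 + ν 0 * t 1 - (t 0 * ν 0 + t 1 * ν 1 + t 2 * ν 2) * (ν 0 * ν 1))) ^ 2 + 2 * (σ 0 2 - (t 0 * ν 2 + ν 0 * t 2 - (t 0 * ν 0 + t 1 * ν 1 + t 2 * ν 2) * (ν 0 * ν 2))) ^ 2 + 2 * (σ 1 2 - (t 1 * ν 2 + ν 1 * t 2 - (t 0 * ν 0 + t 1 * ν 1 + t 2 * ν 2) * (ν 1 * ν 2))) ^ 2 := by positivity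
  linarith


lemma mval (ν t : Fin 3 → ℝ) (hν : ∑ i, ν i ^ 2 = 1) (ht : ∑ i, t i ^ 2 = 1) :
    sInf {s | ∃ σ : Matrix (Fin 3) (Fin 3) ℝ, σ.IsSymm ∧
        σ.mulVec ν = t ∧ s = Real.sqrt (∑ i, ∑ j, σ i j ^ 2)} =
      Real.sqrt (2 - (∑ i, t i * ν i) ^ 2) := by
  have hmem : Real.sqrt (2 - (∑ i, t i * ν i) ^ 2) ∈
      {s | ∃ σ : Matrix (Fin 3) (Fin 3) ℝ, σ.IsSymm ∧
        σ.mulVec ν = t ∧ s = Real.sqrt (∑ i, ∑ j, σ i j ^ 2)} := by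
    exact ⟨sig0 ν t, sig0_symm ν t, sig0_mulVec ν t hν,
      by rw [sig0_norm ν t hν ht]⟩
  have hlb : ∀ s ∈ {s | ∃ σ : Matrix (Fin 3) (Fin 3) ℝ, σ.IsSymm ∧
      σ.mulVec ν = t ∧ s = Real.sqrt (∑ i, ∑ j, σ i j ^ 2)},
      Real.sqrt (2 - (∑ i, t i * ν i) ^ 2) ≤ s := by
    rintro s ⟨σ, hs, hmv, rfl⟩
    exact Real.sqrt_le_sqrt (lower_bound ν t hν ht σ hs hmv)
  exact le_antisymm (csInf_le ⟨_, hlb⟩ hmem) (le_csInf ⟨_, hmem⟩ hlb)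

lemma exists_perp (ν : Fin 3 → ℝ) (hν : ∑ i, ν i ^ 2 = 1) :
    ∃ t : Fin 3 → ℝ, (∑ i, t i ^ 2) = 1 ∧ (∑ i, t i * ν i) = 0 := by
  simp only [Fin.sum_univ_three] at *
  by_cases h : ν 0 = 0 ∧ ν 1 = 0
  · refine ⟨![1, 0, 0], by norm_num [Matrix.cons_val_two], by simp [h.1]⟩
  · have hpos : 0 < ν 0 ^ 2 + ν 1 ^ 2 := by
      rcases not_and_or.mp h with h' | h' <;> positivity
    set r := Real.sqrt (ν 0 ^ 2 + ν 1 ^ 2) with hr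
    have hr2 : r ^ 2 = ν 0 ^ 2 + ν 1 ^ 2 := Real.sq_sqrt hpos.le
    have hrpos : 0 < r := Real.sqrt_pos.mpr hpos
    refine ⟨![-(ν 1) / r, ν 0 / r, 0], ?_, ?_⟩
    · simp only [Matrix.cons_val]
      field_simp
      linarith [hr2]
    · simp only [Matrix.cons_val]
      field_simp
      ring

/-- Let `ν ∈ ℝ³` be a fixed unit vector, and for each unit vector `t` let
`m(t) = inf { |σ|_F : σ symmetric 3×3, σν = t }`.  Then `sup_{|t|=1} m(t) = √2`, the
supremum being attained; in particular `m(t) = √2` whenever `t ⟂ ν`. -/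
theorem stmt13 (ν : Fin 3 → ℝ) (hν : ∑ i, ν i ^ 2 = 1)
    (m : (Fin 3 → ℝ) → ℝ)
    (hm : ∀ t, m t = sInf {s | ∃ σ : Matrix (Fin 3) (Fin 3) ℝ, σ.IsSymm ∧
        σ.mulVec ν = t ∧ s = Real.sqrt (∑ i, ∑ j, σ i j ^ 2)}) :
    IsGreatest {r | ∃ t : Fin 3 → ℝ, (∑ i, t i ^ 2) = 1 ∧ r = m t} (Real.sqrt 2) ∧
    ∀ t : Fin 3 → ℝ, (∑ i, t i ^ 2) = 1 → (∑ i, t i * ν i) = 0 → m t = Real.sqrt 2 := by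
  have key : ∀ t : Fin 3 → ℝ, (∑ i, t i ^ 2) = 1 →
      m t = Real.sqrt (2 - (∑ i, t i * ν i) ^ 2) := fun t ht => by
    rw [hm, mval ν t hν ht]
  constructor
  · constructor
    · obtain ⟨t, ht, hperp⟩ := exists_perp ν hν
      exact ⟨t, ht, by rw [key t ht, hperp]; norm_num⟩
    · rintro r ⟨t, ht, rfl⟩
      rw [key t ht]
      apply Real.sqrt_le_sqrt
      nlinarith [sq_nonneg (∑ i, t i * ν i)]
  · intro t ht hperp
    rw [key t ht, hperp]
    norm_num
end
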